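/- Let X be an n × m real matrix with full column rank m and Moore-Penrose inverse X⁺ = (XᵀX)⁻¹Xᵀ. Then the determinant of the nm × nm matrix −X⁺ᵀ ⊗ X⁺ + [(I_n − X X⁺) ⊗ (X⁺ X⁺ᵀ)] K, where K is the commutation matrix satisfying K·vec(A) = vec(Aᵀ), has absolute value det(XᵀX)⁻ⁿ. -/
import Mathlib


open Matrix Kronecker

theorem jacobian_moorePenrose_full_column_rank (n m : ℕ)
    (X : Matrix (Fin n) (Fin m) ℝ) (hrank : X.rank = m)
    (Y : Matrix (Fin m) (Fin n) ℝ) (hY : Y = (Xᵀ * X)⁻¹ * Xᵀ)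
    (K : Matrix (Fin m × Fin n) (Fin n × Fin m) ℝ)
    (hK : ∀ A : Matrix (Fin n) (Fin m) ℝ,
      K.mulVec (fun p => A p.1 p.2) = fun p => Aᵀ p.1 p.2) :
    |((Matrix.reindex (Equiv.refl (Fin m × Fin n)) (Equiv.prodComm (Fin n) (Fin m)))
        (-(Y ⊗ₖ Yᵀ) + ((Y * Yᵀ) ⊗ₖ (1 - X * Y)) * K)).det|
      = (Xᵀ * X).det ^ (-(n : ℤ)) := by
  classical
  -- the entries of the commutation matrix `K`
  have hKval : ∀ p q, K p q = if (p.2, p.1) = q then 1 else 0 := by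
    intro p q
    have h := congrFun (hK (Matrix.of fun a b => if (a, b) = q then (1:ℝ) else 0)) p
    simp only [Matrix.mulVec, dotProduct, Matrix.of_apply, Matrix.transpose_apply] at h
    rw [← h, Finset.sum_eq_single q]
    · simp
    · intro b _ hb; simp [hb]
    · simp
  -- invertibility of `XᵀX`
  have hrank2 : (Xᵀ * X).rank = m := by rw [Matrix.rank_transpose_mul_self, hrank]
  have hu : IsUnit (Xᵀ * X).det := by
    rw [← Matrix.isUnit_iff_isUnit_det, ← Matrix.mulVec_injective_iff_isUnit]
    have h1 : LinearMap.range (Xᵀ * X).mulVecLin = ⊤ := by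
      apply Submodule.eq_top_of_finrank_eq
      rw [← Matrix.rank, hrank2]
      simp [Module.finrank_fintype_fun_eq_card]
    exact (LinearMap.injective_iff_surjective).mpr (LinearMap.range_eq_top.mp h1)
  -- basic algebraic identities
  set S : Matrix (Fin m) (Fin m) ℝ := (Xᵀ * X)⁻¹ with hSdef
  have hSr : (Xᵀ * X) * S = 1 := Matrix.mul_nonsing_inv _ hu
  have hSl : S * (Xᵀ * X) = 1 := Matrix.nonsing_inv_mul _ hu
  have hYX : Y * X = 1 := by rw [hY, Matrix.mul_assoc]; exact hSl
  have hST : Sᵀ = S := by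
    rw [hSdef, Matrix.transpose_nonsing_inv, Matrix.transpose_mul, Matrix.transpose_transpose]
  have hYT : Yᵀ = X * S := by
    rw [hY, Matrix.transpose_mul, Matrix.transpose_transpose, hST]
  have hY' : S * Xᵀ = Y := hY.symm
  have hYYT : Y * Yᵀ = S := by
    rw [hYT, hY, Matrix.mul_assoc, ← Matrix.mul_assoc Xᵀ X S, hSr, Matrix.mul_one]
  have hXtXY : Xᵀ * (X * Y) = Xᵀ := by
    rw [hY, ← Matrix.mul_assoc, ← Matrix.mul_assoc, hSr, Matrix.one_mul]
  have hXtP : Xᵀ * (1 - X * Y) = 0 := by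
    rw [Matrix.mul_sub, Matrix.mul_one, hXtXY, sub_self]
  have hXYYT : (X * Y) * Yᵀ = Yᵀ := by
    rw [Matrix.mul_assoc, hYYT, ← hYT]
  have hPYt : (1 - X * Y) * Yᵀ = 0 := by
    rw [Matrix.sub_mul, Matrix.one_mul, hXYYT, sub_self]
  have hPP : (X * Y) * (X * Y) = X * Y := by
    rw [Matrix.mul_assoc, ← Matrix.mul_assoc Y X Y, hYX, Matrix.one_mul]
  have hPidem : (1 - X * Y) * (1 - X * Y) = 1 - X * Y := by
    rw [Matrix.sub_mul, Matrix.one_mul, Matrix.mul_sub, Matrix.mul_one, hPP]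
    abel
  have hPsymm : (X * Y)ᵀ = X * Y := by
    rw [Matrix.transpose_mul, hYT, hY, Matrix.mul_assoc]
  -- the commutation matrix is orthogonal
  have hKK : K * Kᵀ = 1 := by
    ext ⟨a, b⟩ ⟨c, d⟩
    simp [Matrix.mul_apply, Matrix.transpose_apply, hKval, Matrix.one_apply,
      ite_mul, one_mul, zero_mul, Prod.ext_iff, ite_and, Fintype.sum_prod_type,
      Finset.sum_ite_eq, and_comm, eq_comm]
  -- reindexing is right multiplication by `Kᵀ`
  have hre : ∀ (M : Matrix (Fin m × Fin n) (Fin n × Fin m) ℝ),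
      (Matrix.reindex (Equiv.refl (Fin m × Fin n)) (Equiv.prodComm (Fin n) (Fin m))) M
        = M * Kᵀ := by
    intro M
    ext p q
    simp only [Matrix.reindex_apply, Matrix.submatrix_apply, Equiv.refl_symm, Equiv.refl_apply,
      Equiv.prodComm_symm, Equiv.prodComm_apply, Matrix.mul_apply, Matrix.transpose_apply, hKval,
      mul_ite, mul_one, mul_zero]
    rw [Finset.sum_eq_single (q.2, q.1)]
    · rw [if_pos rfl]; rfl
    · intro b _ hb; exact if_neg fun h => hb h.symm
    · intro hq; exact absurd (Finset.mem_univ _) hq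
  -- commutation identities
  have hcomm1 : Kᵀ * (Xᵀ ⊗ₖ Yᵀ) = (Yᵀ ⊗ₖ Xᵀ) * K := by
    ext p q
    simp only [Matrix.mul_apply, Matrix.transpose_apply, hKval, kroneckerMap_apply,
      ite_mul, one_mul, zero_mul, mul_ite, mul_one, mul_zero]
    rw [Finset.sum_eq_single ((p.2, p.1) : Fin m × Fin n),
        Finset.sum_eq_single ((q.2, q.1) : Fin m × Fin n)]
    · simp [mul_comm]
    · intro b _ hb; simp [show ¬((b.2, b.1) = q) from fun hc => hb (by
        rcases b with ⟨x,y⟩; rcases q with ⟨c,d⟩; simp only [Prod.mk.injEq] at hc ⊢;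
        exact ⟨hc.2, hc.1⟩)]
    · simp
    · intro b _ hb; simp [show ¬((b.2, b.1) = p) from fun hc => hb (by
        rcases b with ⟨x,y⟩; rcases p with ⟨c,d⟩; simp only [Prod.mk.injEq] at hc ⊢;
        exact ⟨hc.2, hc.1⟩)]
    · simp
  have hcomm2 : Kᵀ * ((1 : Matrix (Fin m) (Fin m) ℝ) ⊗ₖ (1 - X * Y))
      = ((1 - X * Y) ⊗ₖ (1 : Matrix (Fin m) (Fin m) ℝ)) * Kᵀ := by
    ext p q
    simp only [Matrix.mul_apply, Matrix.transpose_apply, hKval, kroneckerMap_apply,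
      ite_mul, one_mul, zero_mul, mul_ite, mul_one, mul_zero]
    rw [Finset.sum_eq_single ((p.2, p.1) : Fin m × Fin n),
        Finset.sum_eq_single ((q.2, q.1) : Fin n × Fin m)]
    · rw [if_pos rfl, if_pos rfl]
      exact mul_comm _ _
    · intro b _ hb; exact if_neg fun h => hb h.symm
    · simp
    · intro b _ hb
      refine if_neg fun h => hb ?_
      rcases b with ⟨x, y⟩
      subst h
      rfl
    · simp
  -- factorization of the Jacobian matrix
  have hfact : (-(Y ⊗ₖ Yᵀ) + ((Y * Yᵀ) ⊗ₖ (1 - X * Y)) * K) * Kᵀ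
      = (S ⊗ₖ (1 : Matrix (Fin n) (Fin n) ℝ)) *
        (((1 : Matrix (Fin m) (Fin m) ℝ) ⊗ₖ (1 - X * Y)) - (Xᵀ ⊗ₖ Yᵀ) * Kᵀ) := by
    rw [Matrix.mul_sub, ← Matrix.mul_assoc, ← Matrix.mul_kronecker_mul,
      ← Matrix.mul_kronecker_mul, hY', Matrix.mul_one, Matrix.one_mul, Matrix.one_mul,
      Matrix.add_mul, Matrix.mul_assoc _ K Kᵀ, hKK, Matrix.mul_one, hYYT, Matrix.neg_mul]
    abel
  -- the second factor is an involution
  have hG2 : (((1 : Matrix (Fin m) (Fin m) ℝ) ⊗ₖ (1 - X * Y)) - (Xᵀ ⊗ₖ Yᵀ) * Kᵀ) *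
      (((1 : Matrix (Fin m) (Fin m) ℝ) ⊗ₖ (1 - X * Y)) - (Xᵀ ⊗ₖ Yᵀ) * Kᵀ) = 1 := by
    have tAA : ((Xᵀ ⊗ₖ Yᵀ) * Kᵀ) * ((Xᵀ ⊗ₖ Yᵀ) * Kᵀ)
        = (1 : Matrix (Fin m) (Fin m) ℝ) ⊗ₖ (X * Y) := by
      rw [Matrix.mul_assoc, ← Matrix.mul_assoc Kᵀ _ Kᵀ, hcomm1, Matrix.mul_assoc _ K Kᵀ, hKK,
        Matrix.mul_one, ← Matrix.mul_kronecker_mul, ← Matrix.transpose_mul, hYX,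
        Matrix.transpose_one, ← Matrix.transpose_mul, hPsymm]
    have tAB : ((Xᵀ ⊗ₖ Yᵀ) * Kᵀ) * ((1 : Matrix (Fin m) (Fin m) ℝ) ⊗ₖ (1 - X * Y)) = 0 := by
      rw [Matrix.mul_assoc, hcomm2, ← Matrix.mul_assoc, ← Matrix.mul_kronecker_mul,
        hXtP, Matrix.mul_one, Matrix.zero_kronecker, Matrix.zero_mul]
    have tBA : ((1 : Matrix (Fin m) (Fin m) ℝ) ⊗ₖ (1 - X * Y)) * ((Xᵀ ⊗ₖ Yᵀ) * Kᵀ) = 0 := by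
      rw [← Matrix.mul_assoc, ← Matrix.mul_kronecker_mul, Matrix.one_mul,
        hPYt, Matrix.kronecker_zero, Matrix.zero_mul]
    have tBB : ((1 : Matrix (Fin m) (Fin m) ℝ) ⊗ₖ (1 - X * Y)) *
        ((1 : Matrix (Fin m) (Fin m) ℝ) ⊗ₖ (1 - X * Y))
        = (1 : Matrix (Fin m) (Fin m) ℝ) ⊗ₖ (1 - X * Y) := by
      rw [← Matrix.mul_kronecker_mul, Matrix.one_mul, hPidem]
    rw [Matrix.sub_mul, Matrix.mul_sub, Matrix.mul_sub, tAA, tAB, tBA, tBB,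
      sub_zero, zero_sub, sub_neg_eq_add, ← Matrix.kronecker_add]
    simp
  -- positivity of `det (XᵀX)`
  have hps : (Xᵀ * X).PosSemidef := by
    have := Matrix.posSemidef_conjTranspose_mul_self X
    rwa [Matrix.conjTranspose_eq_transpose_of_trivial] at this
  have hdet_nonneg : 0 ≤ (Xᵀ * X).det := by
    rw [hps.1.det_eq_prod_eigenvalues]
    exact Finset.prod_nonneg fun i _ => hps.eigenvalues_nonneg i
  have hpos : 0 < (Xᵀ * X).det := lt_of_le_of_ne hdet_nonneg (Ne.symm hu.ne_zero)
  -- determinant computations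
  have hGdet : |(((1 : Matrix (Fin m) (Fin m) ℝ) ⊗ₖ (1 - X * Y)) - (Xᵀ ⊗ₖ Yᵀ) * Kᵀ).det| = 1 := by
    have h : (((1 : Matrix (Fin m) (Fin m) ℝ) ⊗ₖ (1 - X * Y)) - (Xᵀ ⊗ₖ Yᵀ) * Kᵀ).det *
        (((1 : Matrix (Fin m) (Fin m) ℝ) ⊗ₖ (1 - X * Y)) - (Xᵀ ⊗ₖ Yᵀ) * Kᵀ).det = 1 := by
      rw [← Matrix.det_mul, hG2, Matrix.det_one]
    rcases mul_self_eq_one_iff.mp h with h1 | h1 <;> simp [h1]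
  have hSdet : S.det = ((Xᵀ * X).det)⁻¹ := by
    rw [hSdef, Matrix.det_nonsing_inv, Ring.inverse_eq_inv']
  rw [hre, hfact, Matrix.det_mul, Matrix.det_kronecker, Matrix.det_one, one_pow, mul_one,
    Fintype.card_fin, abs_mul, hGdet, mul_one, abs_pow, hSdet, abs_inv, abs_of_pos hpos,
    _root_.zpow_neg, zpow_natCast, inv_pow]
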